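/- For complex numbers A, B, C, D, E, there exist a, b, c, d, e ∈ ℂ such that A·x⁴ + B·x³y + C·x²y² + D·xy³ + E·y⁴ = (d·x² + e·y²)·(a·x² + b·xy + c·y²) in ℂ[x,y] if and only if A·D² + B²·E − B·C·D = 0. -/

import Mathlib

open MvPolynomial in
private lemma factor_aux (a b c d e : ℂ) :
    (MvPolynomial.C d * X 0 ^ 2 + MvPolynomial.C e * X 1 ^ 2) *
      (MvPolynomial.C a * X 0 ^ 2 + MvPolynomial.C b * X 0 * X 1 +
        MvPolynomial.C c * X 1 ^ 2) =
    (MvPolynomial.C (d*a) * X 0 ^ 4 + MvPolynomial.C (d*b) * X 0 ^ 3 * X 1 +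
        MvPolynomial.C (d*c+e*a) * X 0 ^ 2 * X 1 ^ 2 + MvPolynomial.C (e*b) * X 0 * X 1 ^ 3 +
        MvPolynomial.C (e*c) * X 1 ^ 4 : MvPolynomial (Fin 2) ℂ) := by
  simp only [map_mul, map_add]
  ring

open MvPolynomial in
theorem stmt_12 (A B C D E : ℂ) :
    (∃ a b c d e : ℂ,
        (MvPolynomial.C A * X 0 ^ 4 + MvPolynomial.C B * X 0 ^ 3 * X 1 +
            MvPolynomial.C C * X 0 ^ 2 * X 1 ^ 2 + MvPolynomial.C D * X 0 * X 1 ^ 3 +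
            MvPolynomial.C E * X 1 ^ 4
          : MvPolynomial (Fin 2) ℂ) =
        (MvPolynomial.C d * X 0 ^ 2 + MvPolynomial.C e * X 1 ^ 2) *
          (MvPolynomial.C a * X 0 ^ 2 + MvPolynomial.C b * X 0 * X 1 +
            MvPolynomial.C c * X 1 ^ 2)) ↔
    A * D ^ 2 + B ^ 2 * E - B * C * D = 0 := by
  constructor
  · rintro ⟨a, b, c, d, e, h⟩
    rw [factor_aux] at h
    have ev : ∀ t : ℂ,
        A * t ^ 4 + B * t ^ 3 + C * t ^ 2 + D * t + E =
        d*a * t ^ 4 + d*b * t ^ 3 + (d*c+e*a) * t ^ 2 + e*b * t + e*c := by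
      intro t
      have := congrArg (MvPolynomial.eval ![t, 1]) h
      simpa using this
    have e0 := ev 0
    have e1 := ev 1
    have e2 := ev (-1)
    have e3 := ev 2
    have e4 := ev (-2)
    have hA : A = d*a := by linear_combination (1/24)*e3 + (1/24)*e4 - (1/6)*e1 - (1/6)*e2 + (1/4)*e0
    have hB : B = d*b := by linear_combination (1/12)*e3 - (1/12)*e4 - (1/6)*e1 + (1/6)*e2
    have hC : C = d*c + e*a := by linear_combination (-1/24)*e3 - (1/24)*e4 + (2/3)*e1 + (2/3)*e2 - (5/4)*e0
    have hD : D = e*b := by linear_combination (-1/12)*e3 + (1/12)*e4 + (2/3)*e1 - (2/3)*e2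
    have hE : E = e*c := by linear_combination e0
    rw [hA, hB, hC, hD, hE]; ring
  · intro hcond
    suffices h : ∃ a b c d e : ℂ,
        A = d*a ∧ B = d*b ∧ C = d*c+e*a ∧ D = e*b ∧ E = e*c by
      obtain ⟨a, b, c, d, e, h1, h2, h3, h4, h5⟩ := h
      exact ⟨a, b, c, d, e, by rw [factor_aux, h1, h2, h3, h4, h5]⟩
    by_cases hB : B = 0
    · by_cases hA : A = 0
      · exact ⟨C, D, E, 0, 1, by simp [hA, hB]⟩
      · have hD : D = 0 := by
          have : A * D ^ 2 = 0 := by linear_combination hcond + (C*D - B*E)*hB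
          rcases mul_eq_zero.mp this with h | h
          · exact absurd h hA
          · exact pow_eq_zero_iff (n := 2) (by norm_num) |>.mp h
        obtain ⟨s, hs'⟩ := IsAlgClosed.exists_pow_nat_eq (k := ℂ) (C ^ 2 - 4 * A * E) zero_lt_two
        refine ⟨A, 0, C - (C + s) / (2 * A) * A, 1, (C + s) / (2 * A), ?_, ?_, ?_, ?_, ?_⟩
        · ring
        · simp [hB]
        · ring
        · simp [hD]
        · field_simp
          linear_combination hs'
    · refine ⟨A, B, C - A * D / B, 1, D / B, ?_, ?_, ?_, ?_, ?_⟩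
      · ring
      · ring
      · field_simp; ring
      · field_simp
      · field_simp
        linear_combination hcond
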